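/- For every s ∈ [0,1/2], the function w_s defined by w_s(−1) = s and w_s(u) = 1/2 for u ∈ [0,∞) is a fixed point of T(t) for every t ∈ [0,1]. -/

import Mathlib

open Set

noncomputable section

/-- `Ω = {−1} ∪ [0,∞)`. -/
def Omega : Set ℝ := {-1} ∪ Set.Ici 0

/-- Membership in the set `C`: `x` takes values in `[0,1]` on `Ω`
and is 1-Lipschitz on `[0,∞)`. -/
def memC (x : ℝ → ℝ) : Prop :=
  (∀ u ∈ Omega, x u ∈ Set.Icc (0:ℝ) 1) ∧
  ∀ u₁ ∈ Set.Ici (0:ℝ), ∀ u₂ ∈ Set.Ici (0:ℝ), |x u₁ - x u₂| ≤ |u₁ - u₂|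

/-- `α_x(r) = sup { x s : s ∈ {−1} ∪ [r,∞) }`. -/
def alphaF (x : ℝ → ℝ) (r : ℝ) : ℝ := sSup (x '' ({-1} ∪ Set.Ici r))

/-- The semigroup map `T(t)` for `t ∈ [0,1]`:
`(T(t)x)(−1) = x(−1)`, `(T(t)x)(u) = x(u−t)` for `u ≥ t`, and for `0 ≤ u ≤ t`
the three-case definition via `α_x`. -/
def T (t : ℝ) (x : ℝ → ℝ) : ℝ → ℝ := fun u =>
  if u = -1 then x (-1)
  else if t ≤ u then x (u - t)
  else if 1 - alphaF x (1 - t + u) ≤ x 0 - t + u then x 0 - t + u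
  else if x 0 + t - u ≤ 1 - alphaF x (1 - t + u) then x 0 + t - u
  else 1 - alphaF x (1 - t + u)

/-- The supremum distance over `Ω`. -/
def supDist (x y : ℝ → ℝ) : ℝ := sSup ((fun u => |x u - y u|) '' Omega)

/-- `w_s(−1) = s`, `w_s(u) = 1/2` for `u ≥ 0`. -/
def wFun (s : ℝ) : ℝ → ℝ := fun u => if u = -1 then s else 1/2

/-- for every `s ∈ [0,1/2]`, `w_s` is a fixed point of `T(t)`
for every `t ∈ [0,1]` (as functions on `Ω`). -/

lemma alpha_w (s r : ℝ) (hs : s ≤ 1/2) : alphaF (wFun s) r = 1/2 := by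
  unfold alphaF
  apply le_antisymm
  · apply csSup_le
    · exact ⟨wFun s (-1), ⟨-1, Or.inl rfl, rfl⟩⟩
    · rintro y ⟨u, _, rfl⟩
      unfold wFun; split <;> [linarith; norm_num]
  · apply le_csSup
    · refine ⟨1/2, ?_⟩
      rintro y ⟨u, _, rfl⟩
      unfold wFun; split <;> [linarith; norm_num]
    · refine ⟨max r 0, Or.inr (Set.mem_Ici.mpr (le_max_left _ _)), ?_⟩
      have h0 : (0:ℝ) ≤ max r 0 := le_max_right _ _
      have : max r 0 ≠ -1 := by intro h; rw [h] at h0; linarith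
      simp [wFun, this]

theorem stmt_12 (s : ℝ) (hs : s ∈ Set.Icc (0:ℝ) (1/2)) (t : ℝ) (ht : t ∈ Set.Icc (0:ℝ) 1) :
    ∀ u ∈ Omega, T t (wFun s) u = wFun s u := by
  intro u hu
  unfold T
  rcases hu with hu | hu
  · simp [mem_singleton_iff.mp hu]
  · have hu0 : (0:ℝ) ≤ u := hu
    have hne : u ≠ -1 := by intro h; rw [h] at hu0; linarith
    rw [if_neg hne]
    by_cases h : t ≤ u
    · have h2 : u - t ≠ -1 := by intro h3; have := ht.2; linarith
      rw [if_pos h]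
      simp [wFun, h2, hne]
    · rw [if_neg h, alpha_w s _ hs.2]
      have hw0 : wFun s 0 = 1/2 := by norm_num [wFun]
      rw [hw0]
      have h1 : ¬ ((1:ℝ) - 1/2 ≤ 1/2 - t + u) := by push_neg; linarith
      have h2 : ¬ ((1:ℝ)/2 + t - u ≤ 1 - 1/2) := by push_neg; linarith
      rw [if_neg h1, if_neg h2]
      unfold wFun; rw [if_neg hne]; norm_num
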